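/- The second derivatives of the rescaled iterates are uniformly bounded: there exists a constant K (depending only on a, δ, C, ε*) such that |φₙ″(x)| ≤ K for all n ≥ 1 and all x ∈ [0, ε*]. -/

import Mathlib

noncomputable def auxD (f f' : ℝ → ℝ) (n : ℕ) (x : ℝ) : ℝ :=
  ∏ i ∈ Finset.range n, f' (f^[i] x)

noncomputable def auxE (f f' f'' : ℝ → ℝ) : ℕ → ℝ → ℝ
  | 0, _ => 0
  | n + 1, x => auxE f f' f'' n x * f' (f^[n] x)
      + auxD f f' n x * (f'' (f^[n] x) * auxD f f' n x)

set_option maxHeartbeats 1000000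

private lemma geomsum_le' (r : ℝ) (h0 : 0 ≤ r) (h1 : r < 1) (n : ℕ) :
    ∑ i ∈ Finset.range n, r ^ i ≤ (1 - r)⁻¹ := by
  calc ∑ i ∈ Finset.range n, r ^ i ≤ ∑' i : ℕ, r ^ i :=
        Summable.sum_le_tsum _ (fun i _ => pow_nonneg h0 i) (summable_geometric_of_lt_one h0 h1)
    _ = (1 - r)⁻¹ := tsum_geometric_of_lt_one h0 h1

/-- Under the standing hypotheses, the second derivatives of the rescaled
iterates `φₙ(x) = f⁽ⁿ⁾(x)/aⁿ` are uniformly bounded: there is a constant `K` such that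
`|φₙ″(x)| ≤ K` for all `n ≥ 1` and `x ∈ [0,ε*]`. -/
theorem rescaled_iterates_second_deriv_bounded (a δ C εs : ℝ) (f : ℝ → ℝ)
    (ha0 : 0 < a) (ha1 : a < 1) (hδ : 0 < δ) (hC : 0 < C) (hεs : 0 < εs)
    (hsmall : a * (1 + δ) ^ 2 < 1)
    (hf : ContDiffOn ℝ 2 f (Set.Icc 0 εs))
    (hf0 : f 0 = 0)
    (hf'0 : derivWithin f (Set.Icc 0 εs) 0 = a)
    (hf'' : ∀ x ∈ Set.Icc 0 εs,
      |derivWithin (derivWithin f (Set.Icc 0 εs)) (Set.Icc 0 εs) x| ≤ C)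
    (hf1 : ∀ x ∈ Set.Icc 0 εs, 0 ≤ f x ∧ f x ≤ (1 + δ) * a * x)
    (hf2 : ∀ x ∈ Set.Icc 0 εs, |f x - a * x| ≤ C * x ^ 2) :
    ∃ K : ℝ, ∀ n : ℕ, 1 ≤ n → ∀ x ∈ Set.Icc 0 εs,
      |derivWithin (derivWithin (fun y => f^[n] y / a ^ n) (Set.Icc 0 εs))
        (Set.Icc 0 εs) x| ≤ K := by
  set S := Set.Icc (0:ℝ) εs with hS
  have hU : UniqueDiffOn ℝ S := uniqueDiffOn_Icc hεs
  set F1 := derivWithin f S with hF1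
  set F2 := derivWithin F1 S with hF2
  -- r and its properties
  set r := (1 + δ) * a with hr
  have hr0 : 0 < r := by positivity
  have hr1 : r < 1 := by nlinarith
  -- f maps S to S
  have hfle : ∀ x ∈ S, f x ≤ r * x := fun x hx => (hf1 x hx).2
  have hmaps : Set.MapsTo f S S := by
    intro x hx
    obtain ⟨hx0, hx1⟩ := hx
    refine ⟨(hf1 x ⟨hx0, hx1⟩).1, ?_⟩
    have := (hf1 x ⟨hx0, hx1⟩).2
    nlinarith
  -- iterates stay in S and decay geometrically
  have hit : ∀ n : ℕ, ∀ x ∈ S, f^[n] x ∈ S := by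
    intro n
    induction n with
    | zero => intro x hx; simpa using hx
    | succ n ih =>
      intro x hx
      rw [Function.iterate_succ_apply']
      exact hmaps (ih x hx)
  have hitle : ∀ n : ℕ, ∀ x ∈ S, f^[n] x ≤ r ^ n * x := by
    intro n
    induction n with
    | zero => intro x hx; simp
    | succ n ih =>
      intro x hx
      rw [Function.iterate_succ_apply']
      calc f (f^[n] x) ≤ r * f^[n] x := hfle _ (hit n x hx)
        _ ≤ r * (r ^ n * x) := by
            have := ih x hx
            nlinarith
        _ = r ^ (n+1) * x := by ring
  have hitεs : ∀ n : ℕ, ∀ x ∈ S, f^[n] x ≤ r ^ n * εs := by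
    intro n x hx
    calc f^[n] x ≤ r ^ n * x := hitle n x hx
      _ ≤ r ^ n * εs := by
          have := hx.2
          have : (0:ℝ) ≤ r ^ n := le_of_lt (pow_pos hr0 n)
          nlinarith [hx.2, pow_pos hr0 n]
  -- derivatives of f
  have hdf : ∀ x ∈ S, HasDerivWithinAt f (F1 x) S x := by
    intro x hx
    exact ((hf.differentiableOn (by norm_num)) x hx).hasDerivWithinAt
  have hcf1 : ContDiffOn ℝ 1 F1 S := hf.derivWithin hU (by norm_num)
  have hdf1 : ∀ x ∈ S, HasDerivWithinAt F1 (F2 x) S x := by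
    intro x hx
    exact ((hcf1.differentiableOn (by norm_num)) x hx).hasDerivWithinAt
  -- |F1 x - a| ≤ C x
  have hF1a : ∀ x ∈ S, |F1 x - a| ≤ C * x := by
    intro x hx
    have h0S : (0:ℝ) ∈ S := ⟨le_refl 0, le_of_lt hεs⟩
    have key := Convex.norm_image_sub_le_of_norm_hasDerivWithin_le
      hdf1 (fun y hy => by simpa [Real.norm_eq_abs] using hf'' y hy)
      (convex_Icc 0 εs) h0S hx
    rw [Real.norm_eq_abs, Real.norm_eq_abs] at key
    simpa [hf'0, abs_of_nonneg hx.1] using key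
  -- |F1 x| ≤ a * exp((C/a) x)
  have hF1b : ∀ x ∈ S, |F1 x| ≤ a * Real.exp ((C / a) * x) := by
    intro x hx
    have h1 : |F1 x| ≤ a + C * x := by
      have := hF1a x hx
      have : |F1 x| ≤ |a| + |F1 x - a| := by
        calc |F1 x| = |a + (F1 x - a)| := by ring_nf
          _ ≤ |a| + |F1 x - a| := abs_add_le _ _
      rw [abs_of_pos ha0] at this
      linarith [hF1a x hx]
    have h2 : a + C * x ≤ a * Real.exp ((C / a) * x) := by
      have := Real.add_one_le_exp ((C / a) * x)
      have ha' : a ≠ 0 := ne_of_gt ha0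
      calc a + C * x = a * ((C / a) * x + 1) := by field_simp; ring
        _ ≤ a * Real.exp ((C / a) * x) := by nlinarith
    linarith
  -- bound on F1 at iterates
  set c := C * εs / a with hc
  have hc0 : 0 < c := by positivity
  have hF1it : ∀ n : ℕ, ∀ x ∈ S, |F1 (f^[n] x)| ≤ a * Real.exp (c * r ^ n) := by
    intro n x hx
    have h1 := hF1b (f^[n] x) (hit n x hx)
    have h2 : (C / a) * f^[n] x ≤ c * r ^ n := by
      have h3 := hitεs n x hx
      have : (C / a) * f^[n] x ≤ (C / a) * (r ^ n * εs) := by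
        have hCa : 0 < C / a := by positivity
        nlinarith
      have ha' : a ≠ 0 := ne_of_gt ha0
      calc (C / a) * f^[n] x ≤ (C / a) * (r ^ n * εs) := this
        _ = c * r ^ n := by rw [hc]; field_simp
    calc |F1 (f^[n] x)| ≤ a * Real.exp ((C / a) * f^[n] x) := h1
      _ ≤ a * Real.exp (c * r ^ n) := by
          have := Real.exp_le_exp.mpr h2
          nlinarith
  -- sums of geometric
  set M := Real.exp (c * (1 - r)⁻¹) with hM
  have hM1 : 1 ≤ M := by
    rw [hM]
    have : (0:ℝ) ≤ c * (1 - r)⁻¹ := by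
      have : (0:ℝ) < (1 - r)⁻¹ := by
        apply inv_pos.mpr; linarith
      positivity
    calc (1:ℝ) = Real.exp 0 := (Real.exp_zero).symm
      _ ≤ _ := Real.exp_le_exp.mpr this
  have hSn : ∀ n : ℕ, Real.exp (c * ∑ i ∈ Finset.range n, r ^ i) ≤ M := by
    intro n
    rw [hM]
    apply Real.exp_le_exp.mpr
    have := geomsum_le' r (le_of_lt hr0) hr1 n
    nlinarith
  -- first derivative of iterates
  have hD : ∀ n : ℕ, ∀ x ∈ S, HasDerivWithinAt (f^[n]) (auxD f F1 n x) S x := by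
    intro n
    induction n with
    | zero =>
      intro x hx
      simpa [auxD] using (hasDerivWithinAt_id x S)
    | succ n ih =>
      intro x hx
      have hmapn : Set.MapsTo (f^[n]) S S := fun y hy => hit n y hy
      have h := (hdf (f^[n] x) (hit n x hx)).comp x (ih x hx) hmapn
      have heq : (f ∘ f^[n]) = f^[n+1] := by
        funext y; simp [Function.comp, Function.iterate_succ_apply']
      rw [heq] at h
      have : F1 (f^[n] x) * auxD f F1 n x = auxD f F1 (n+1) x := by
        rw [auxD, auxD, Finset.prod_range_succ]; ring
      rwa [this] at h
  -- bound |auxD n x| ≤ a^n * exp(c * Σ r^i)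
  have hDb : ∀ n : ℕ, ∀ x ∈ S,
      |auxD f F1 n x| ≤ a ^ n * Real.exp (c * ∑ i ∈ Finset.range n, r ^ i) := by
    intro n
    induction n with
    | zero => intro x hx; simp [auxD]
    | succ n ih =>
      intro x hx
      rw [auxD, Finset.prod_range_succ, abs_mul]
      have h1 := ih x hx
      have h2 := hF1it n x hx
      have hexp1 : (0:ℝ) < Real.exp (c * ∑ i ∈ Finset.range n, r ^ i) := Real.exp_pos _
      calc |∏ i ∈ Finset.range n, F1 (f^[i] x)| * |F1 (f^[n] x)|
          ≤ (a ^ n * Real.exp (c * ∑ i ∈ Finset.range n, r ^ i)) * (a * Real.exp (c * r ^ n)) := by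
            apply mul_le_mul _ h2 (abs_nonneg _) (by positivity)
            simpa [auxD] using h1
        _ = a ^ (n+1) * Real.exp (c * ∑ i ∈ Finset.range (n+1), r ^ i) := by
            rw [Finset.sum_range_succ, mul_add, Real.exp_add]; ring
  have hDbM : ∀ n : ℕ, ∀ x ∈ S, |auxD f F1 n x| ≤ a ^ n * M := by
    intro n x hx
    calc |auxD f F1 n x| ≤ a ^ n * Real.exp (c * ∑ i ∈ Finset.range n, r ^ i) := hDb n x hx
      _ ≤ a ^ n * M := by
          have := hSn n
          have := pow_pos ha0 n
          nlinarith
  -- derivative of auxD : auxE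
  have hE : ∀ n : ℕ, ∀ x ∈ S, HasDerivWithinAt (auxD f F1 n) (auxE f F1 F2 n x) S x := by
    intro n
    induction n with
    | zero =>
      intro x hx
      simpa [auxE, show auxD f F1 0 = fun _ => (1:ℝ) from funext fun y => by simp [auxD]] using (hasDerivWithinAt_const x S (1:ℝ))
    | succ n ih =>
      intro x hx
      have hmapn : Set.MapsTo (f^[n]) S S := fun y hy => hit n y hy
      have h1 : HasDerivWithinAt (fun y => F1 (f^[n] y)) (F2 (f^[n] x) * auxD f F1 n x) S x :=
        (hdf1 (f^[n] x) (hit n x hx)).comp x (hD n x hx) hmapn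
      have h2 := (ih x hx).mul h1
      have heq : (fun y => auxD f F1 n y * F1 (f^[n] y)) = auxD f F1 (n+1) := by
        funext y; rw [auxD, auxD, Finset.prod_range_succ]
      rw [show (auxD f F1 n * fun y => F1 (f^[n] y)) = auxD f F1 (n+1) from heq] at h2
      have : auxE f F1 F2 n x * F1 (f^[n] x) + auxD f F1 n x * (F2 (f^[n] x) * auxD f F1 n x)
          = auxE f F1 F2 (n+1) x := by rw [auxE]
      rwa [this] at h2
  -- bound on auxE
  set Q := C * M ^ 2 / (a * (1 - a)) with hQ
  have hQ0 : 0 < Q := by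
    apply div_pos (by positivity)
    apply mul_pos ha0; linarith
  have hEb : ∀ n : ℕ, ∀ x ∈ S,
      |auxE f F1 F2 n x| ≤ Q * Real.exp (c * ∑ i ∈ Finset.range n, r ^ i) * (a ^ n - a ^ (2 * n)) := by
    intro n
    induction n with
    | zero => intro x hx; simp [auxE]
    | succ n ih =>
      intro x hx
      rw [auxE]
      set en := Real.exp (c * ∑ i ∈ Finset.range n, r ^ i) with hen
      set en1 := Real.exp (c * ∑ i ∈ Finset.range (n+1), r ^ i) with hen1
      have hen1eq : en1 = en * Real.exp (c * r ^ n) := by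
        rw [hen1, hen, Finset.sum_range_succ, mul_add, Real.exp_add]
      have hen0 : (0:ℝ) < en := Real.exp_pos _
      have hern : (1:ℝ) ≤ Real.exp (c * r ^ n) := by
        rw [show (1:ℝ) = Real.exp 0 from (Real.exp_zero).symm]
        apply Real.exp_le_exp.mpr; positivity
      have hen1' : (0:ℝ) < en1 := Real.exp_pos _
      have h1 := ih x hx
      have h2 := hF1it n x hx
      have h3 := hDbM n x hx
      have hpow : a ^ (2*n) ≤ a ^ n := by
        apply pow_le_pow_of_le_one (le_of_lt ha0) (le_of_lt ha1); omega
      have hEn0 : (0:ℝ) ≤ a ^ n - a ^ (2*n) := by linarith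
      -- first term
      have t1 : |auxE f F1 F2 n x * F1 (f^[n] x)| ≤ Q * en1 * (a ^ (n+1) - a ^ (2*n+1)) := by
        rw [abs_mul]
        calc |auxE f F1 F2 n x| * |F1 (f^[n] x)|
            ≤ (Q * en * (a ^ n - a ^ (2*n))) * (a * Real.exp (c * r ^ n)) := by
              apply mul_le_mul h1 h2 (abs_nonneg _)
              positivity
          _ = Q * en1 * (a ^ (n+1) - a ^ (2*n+1)) := by
              rw [hen1eq]; ring
      -- second term
      have t2 : |auxD f F1 n x * (F2 (f^[n] x) * auxD f F1 n x)|
          ≤ C * M ^ 2 * a ^ (2*n) := by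
        rw [abs_mul, abs_mul]
        have hf2b := hf'' (f^[n] x) (hit n x hx)
        have hDn : (0:ℝ) ≤ |auxD f F1 n x| := abs_nonneg _
        have haM : (0:ℝ) ≤ a ^ n * M := by positivity
        calc |auxD f F1 n x| * (|F2 (f^[n] x)| * |auxD f F1 n x|)
            ≤ (a ^ n * M) * (C * (a ^ n * M)) := by
              apply mul_le_mul h3 _ (by positivity) haM
              apply mul_le_mul hf2b h3 hDn (le_of_lt hC)
          _ = C * M ^ 2 * a ^ (2*n) := by ring
      have t3 : C * M ^ 2 * a ^ (2*n) ≤ Q * en1 * (a ^ (2*n+1) - a ^ (2*(n+1))) := by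
        have key : Q * (a ^ (2*n+1) - a ^ (2*(n+1))) = C * M ^ 2 * a ^ (2*n) := by
          rw [hQ]
          have h1a : a ≠ 0 := ne_of_gt ha0
          have h2a : (1:ℝ) - a ≠ 0 := by intro h; linarith [(by linarith : (1:ℝ) - a > 0)]
          field_simp
          ring
        have hpos : (0:ℝ) ≤ Q * (a ^ (2*n+1) - a ^ (2*(n+1))) := by
          rw [key]; positivity
        have hen1ge : (1:ℝ) ≤ en1 := by
          rw [hen1, show (1:ℝ) = Real.exp 0 from (Real.exp_zero).symm]
          apply Real.exp_le_exp.mpr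
          have : (0:ℝ) ≤ ∑ i ∈ Finset.range (n+1), r ^ i :=
            Finset.sum_nonneg (fun i _ => pow_nonneg (le_of_lt hr0) i)
          exact mul_nonneg (le_of_lt hc0) this
        calc C * M ^ 2 * a ^ (2*n) = Q * (a ^ (2*n+1) - a ^ (2*(n+1))) := key.symm
          _ ≤ Q * en1 * (a ^ (2*n+1) - a ^ (2*(n+1))) := by nlinarith [hpos, hen1ge]
      calc |auxE f F1 F2 n x * F1 (f^[n] x) + auxD f F1 n x * (F2 (f^[n] x) * auxD f F1 n x)|
          ≤ |auxE f F1 F2 n x * F1 (f^[n] x)| + |auxD f F1 n x * (F2 (f^[n] x) * auxD f F1 n x)| :=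
            abs_add_le _ _
        _ ≤ Q * en1 * (a ^ (n+1) - a ^ (2*n+1)) + Q * en1 * (a ^ (2*n+1) - a ^ (2*(n+1))) := by
            linarith [t1, t2, t3]
        _ = Q * en1 * (a ^ (n+1) - a ^ (2*(n+1))) := by ring
  -- final bound on |auxE| / a^n
  have hEbM : ∀ n : ℕ, ∀ x ∈ S, |auxE f F1 F2 n x| ≤ Q * M * a ^ n := by
    intro n x hx
    have h1 := hEb n x hx
    have h2 := hSn n
    have hpow : a ^ (2*n) ≤ a ^ n := by
      apply pow_le_pow_of_le_one (le_of_lt ha0) (le_of_lt ha1); omega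
    have hp0 : (0:ℝ) < a ^ n := pow_pos ha0 n
    have hp20 : (0:ℝ) < a ^ (2*n) := pow_pos ha0 _
    have hen0 : (0:ℝ) < Real.exp (c * ∑ i ∈ Finset.range n, r ^ i) := Real.exp_pos _
    have hM0 : (0:ℝ) < M := lt_of_lt_of_le one_pos hM1
    have hΔ : (0:ℝ) ≤ a ^ n - a ^ (2*n) := by linarith
    calc |auxE f F1 F2 n x| ≤ Q * Real.exp (c * ∑ i ∈ Finset.range n, r ^ i) * (a ^ n - a ^ (2*n)) := h1
      _ ≤ Q * M * (a ^ n - a ^ (2*n)) := by nlinarith [mul_nonneg (le_of_lt hQ0) hΔ]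
      _ ≤ Q * M * a ^ n := by nlinarith [mul_pos hQ0 hM0]
  -- now compute the derivWithins
  refine ⟨Q * M / a ^ 0 * 1 ⊔ Q * M / a, ?_⟩
  intro n hn x hx
  have han : (a:ℝ) ^ n ≠ 0 := ne_of_gt (pow_pos ha0 n)
  -- inner derivative
  have inner : ∀ y ∈ S, derivWithin (fun z => f^[n] z / a ^ n) S y = auxD f F1 n y / a ^ n := by
    intro y hy
    exact ((hD n y hy).div_const (a ^ n)).derivWithin (hU y hy)
  have outer : derivWithin (derivWithin (fun z => f^[n] z / a ^ n) S) S x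
      = auxE f F1 F2 n x / a ^ n := by
    have e1 : derivWithin (derivWithin (fun z => f^[n] z / a ^ n) S) S x
        = derivWithin (fun y => auxD f F1 n y / a ^ n) S x :=
      derivWithin_congr (fun y hy => inner y hy) (inner x hx)
    rw [e1]
    exact ((hE n x hx).div_const (a ^ n)).derivWithin (hU x hx)
  rw [outer, abs_div, abs_of_pos (pow_pos ha0 n)]
  have := hEbM n x hx
  have h2 : |auxE f F1 F2 n x| / a ^ n ≤ Q * M := by
    rw [div_le_iff₀ (pow_pos ha0 n)]
    nlinarith [hEbM n x hx]
  have h3 : Q * M ≤ Q * M / a ^ 0 * 1 ⊔ Q * M / a := by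
    apply le_max_of_le_left
    simp
  linarith
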